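/- For any policy π and state s in a finite discounted MDP, max over reward functions R in [-1,1]^(S×A) of Reg(π,R)(s) is at least half of max over pairs (π', R) of Reg(π',R)(s). That is, whatever policy the agent follows, some admissible reward function gives it at least half of the worst-case achievable regret. -/
import Mathlib

section Aux

variable {S A : Type*} [Fintype S] [Fintype A] [Nonempty S] [Nonempty A]

/-- Negating the reward negates the value function. -/
lemma V_neg (T : S → A → S → ℝ)
    (hT : ∀ s a, (∀ s', 0 ≤ T s a s') ∧ ∑ s', T s a s' = 1)
    (γ : ℝ) (hγ0 : 0 ≤ γ) (hγ1 : γ < 1)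
    (V : (S → A) → (S × A → ℝ) → S → ℝ)
    (hV : ∀ (π : S → A) (R : S × A → ℝ) (s : S),
      V π R s = R (s, π s) + γ * ∑ s', T s (π s) s' * V π R s')
    (π : S → A) (R : S × A → ℝ) (t : S) :
    V π (fun x => -R x) t = - V π R t := by
  set d : S → ℝ := fun u => V π (fun x => -R x) u + V π R u with hd
  have hbell : ∀ u, d u = γ * ∑ u', T u (π u) u' * d u' := by
    intro u
    have h1 := hV π (fun x => -R x) u
    have h2 := hV π R u
    have h3 : ∑ u', T u (π u) u' * d u'
        = ∑ u', (T u (π u) u' * V π (fun x => -R x) u'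
            + T u (π u) u' * V π R u') := by
      simp [d, mul_add]
    rw [h3, Finset.sum_add_distrib]
    simp only [d]
    rw [h1, h2]; ring
  obtain ⟨s0, -, hs0⟩ := Finset.exists_mem_eq_sup' (Finset.univ_nonempty (α := S))
    (fun u => |d u|)
  set M := Finset.univ.sup' (Finset.univ_nonempty (α := S)) (fun u => |d u|) with hM
  have hle : ∀ u, |d u| ≤ M := by
    intro u; rw [hM]; exact Finset.le_sup' (fun u => |d u|) (Finset.mem_univ u)
  have hMγ : M ≤ γ * M := by
    have hkey : |∑ u', T s0 (π s0) u' * d u'| ≤ M := by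
      calc |∑ u', T s0 (π s0) u' * d u'| ≤ ∑ u', |T s0 (π s0) u' * d u'| :=
            Finset.abs_sum_le_sum_abs _ _
        _ ≤ ∑ u', T s0 (π s0) u' * M := by
            apply Finset.sum_le_sum
            intro u' _
            rw [abs_mul, abs_of_nonneg ((hT s0 (π s0)).1 u')]
            exact mul_le_mul_of_nonneg_left (hle u') ((hT s0 (π s0)).1 u')
        _ = M := by rw [← Finset.sum_mul, (hT s0 (π s0)).2, one_mul]
    calc M = |d s0| := hs0
      _ = |γ * ∑ u', T s0 (π s0) u' * d u'| := by rw [hbell s0]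
      _ = γ * |∑ u', T s0 (π s0) u' * d u'| := by rw [abs_mul, abs_of_nonneg hγ0]
      _ ≤ γ * M := mul_le_mul_of_nonneg_left hkey hγ0
  have hM0 : M ≤ 0 := by nlinarith
  have : |d t| ≤ 0 := le_trans (hle t) hM0
  have hdt : d t = 0 := abs_nonpos_iff.mp this
  have : V π (fun x => -R x) t + V π R t = 0 := hdt
  linarith

/-- Values of bounded rewards are bounded by `1/(1-γ)`. -/
lemma V_bound (T : S → A → S → ℝ)
    (hT : ∀ s a, (∀ s', 0 ≤ T s a s') ∧ ∑ s', T s a s' = 1)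
    (γ : ℝ) (hγ0 : 0 ≤ γ) (hγ1 : γ < 1)
    (V : (S → A) → (S × A → ℝ) → S → ℝ)
    (hV : ∀ (π : S → A) (R : S × A → ℝ) (s : S),
      V π R s = R (s, π s) + γ * ∑ s', T s (π s) s' * V π R s')
    (π : S → A) (R : S × A → ℝ) (hR : ∀ x, R x ∈ Set.Icc (-1 : ℝ) 1) (t : S) :
    |V π R t| ≤ 1 / (1 - γ) := by
  have h1γ : (0:ℝ) < 1 - γ := by linarith
  obtain ⟨s0, -, hs0⟩ := Finset.exists_mem_eq_sup' (Finset.univ_nonempty (α := S))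
    (fun u => |V π R u|)
  set M := Finset.univ.sup' (Finset.univ_nonempty (α := S)) (fun u => |V π R u|) with hM
  have hle : ∀ u, |V π R u| ≤ M := by
    intro u; rw [hM]; exact Finset.le_sup' (fun u => |V π R u|) (Finset.mem_univ u)
  have hMγ : M ≤ 1 + γ * M := by
    have hRb : |R (s0, π s0)| ≤ 1 := abs_le.mpr ⟨(hR _).1, (hR _).2⟩
    have hsum : |∑ u', T s0 (π s0) u' * V π R u'| ≤ M := by
      calc |∑ u', T s0 (π s0) u' * V π R u'| ≤ ∑ u', |T s0 (π s0) u' * V π R u'| :=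
            Finset.abs_sum_le_sum_abs _ _
        _ ≤ ∑ u', T s0 (π s0) u' * M := by
            apply Finset.sum_le_sum
            intro u' _
            rw [abs_mul, abs_of_nonneg ((hT s0 (π s0)).1 u')]
            exact mul_le_mul_of_nonneg_left (hle u') ((hT s0 (π s0)).1 u')
        _ = M := by rw [← Finset.sum_mul, (hT s0 (π s0)).2, one_mul]
    have hfin : |R (s0, π s0) + γ * ∑ u', T s0 (π s0) u' * V π R u'| ≤ 1 + γ * M := by
     calc |R (s0, π s0) + γ * ∑ u', T s0 (π s0) u' * V π R u'|
        ≤ |R (s0, π s0)| + |γ * ∑ u', T s0 (π s0) u' * V π R u'| := abs_add_le _ _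
      _ ≤ 1 + γ * M := by
          rw [abs_mul, abs_of_nonneg hγ0]
          exact add_le_add hRb (mul_le_mul_of_nonneg_left hsum hγ0)
    calc M = |V π R s0| := hs0
      _ = |R (s0, π s0) + γ * ∑ u', T s0 (π s0) u' * V π R u'| := by rw [← hV π R s0]
      _ ≤ 1 + γ * M := hfin
  have hMb : M ≤ 1 / (1 - γ) := by
    rw [le_div_iff₀ h1γ]; nlinarith
  exact le_trans (hle t) hMb

end Aux

/-- No Free Lunch, half-maximal regret: in a finite discounted
MDP, for any policy `π` and state `s`, the supremum over admissible reward
functions `R ∈ [-1,1]^{S×A}` of `Reg(π,R)(s)` is at least half the supremum over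
pairs `(π', R)` of `Reg(π',R)(s)`. -/
theorem half_maximal_regret {S A : Type*}
    [Fintype S] [Fintype A] [Nonempty S] [Nonempty A] [DecidableEq S]
    (T : S → A → S → ℝ)
    (hT : ∀ s a, (∀ s', 0 ≤ T s a s') ∧ ∑ s', T s a s' = 1)
    (γ : ℝ) (hγ0 : 0 ≤ γ) (hγ1 : γ < 1)
    (V : (S → A) → (S × A → ℝ) → S → ℝ)
    (hV : ∀ (π : S → A) (R : S × A → ℝ) (s : S),
      V π R s = R (s, π s) + γ * ∑ s', T s (π s) s' * V π R s')
    (π : S → A) (s : S) :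
    (1 / 2) * (⨆ q : (S → A) × {R : S × A → ℝ // ∀ x, R x ∈ Set.Icc (-1 : ℝ) 1},
        (⨆ π' : S → A, V π' q.2.1 s) - V q.1 q.2.1 s)
      ≤ ⨆ R : {R : S × A → ℝ // ∀ x, R x ∈ Set.Icc (-1 : ℝ) 1},
        (⨆ π' : S → A, V π' R.1 s) - V π R.1 s := by
  have h1γ : (0:ℝ) < 1 - γ := by linarith
  haveI : Nonempty {R : S × A → ℝ // ∀ x, R x ∈ Set.Icc (-1 : ℝ) 1} :=
    ⟨⟨fun _ => 0, fun x => by constructor <;> norm_num⟩⟩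
  set f : {R : S × A → ℝ // ∀ x, R x ∈ Set.Icc (-1 : ℝ) 1} → ℝ :=
    fun R => (⨆ π' : S → A, V π' R.1 s) - V π R.1 s with hf
  have hbdd : BddAbove (Set.range f) := by
    refine ⟨2 / (1 - γ), ?_⟩
    rintro _ ⟨R, rfl⟩
    have h1 : (⨆ π' : S → A, V π' R.1 s) ≤ 1 / (1 - γ) :=
      ciSup_le (fun π' => (abs_le.mp (V_bound T hT γ hγ0 hγ1 V hV π' R.1 R.2 s)).2)
    have h2 : -V π R.1 s ≤ 1 / (1 - γ) := by
      have := (abs_le.mp (V_bound T hT γ hγ0 hγ1 V hV π R.1 R.2 s)).1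
      linarith
    simp only [hf]
    have : (2:ℝ) / (1 - γ) = 1 / (1 - γ) + 1 / (1 - γ) := by ring
    rw [this]; linarith
  have hmain : ∀ q : (S → A) × {R : S × A → ℝ // ∀ x, R x ∈ Set.Icc (-1 : ℝ) 1},
      (⨆ π' : S → A, V π' q.2.1 s) - V q.1 q.2.1 s
        ≤ 2 * ⨆ R : {R : S × A → ℝ // ∀ x, R x ∈ Set.Icc (-1 : ℝ) 1}, f R := by
    rintro ⟨π', R⟩
    set Rn : {R : S × A → ℝ // ∀ x, R x ∈ Set.Icc (-1 : ℝ) 1} :=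
      ⟨fun x => -R.1 x, fun x => by
        obtain ⟨h1, h2⟩ := R.2 x
        constructor <;> simp <;> linarith⟩ with hRn
    have hgR : f R ≤ ⨆ R', f R' := le_ciSup hbdd R
    have hgRn : f Rn ≤ ⨆ R', f R' := le_ciSup hbdd Rn
    have hneg : ∀ π₀ : S → A, V π₀ Rn.1 s = - V π₀ R.1 s := by
      intro π₀
      exact V_neg T hT γ hγ0 hγ1 V hV π₀ R.1 s
    have hfRn : f Rn = (⨆ π'' : S → A, -V π'' R.1 s) + V π R.1 s := by
      have h' : (⨆ π'' : S → A, V π'' Rn.1 s) = ⨆ π'' : S → A, -V π'' R.1 s :=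
        iSup_congr hneg
      simp only [hf]
      rw [hneg π, h']
      ring
    have hlow : -V π' R.1 s ≤ ⨆ π'' : S → A, -V π'' R.1 s :=
      le_ciSup (f := fun π'' : S → A => -V π'' R.1 s) (Finite.bddAbove_range _) π'
    have : (⨆ π'' : S → A, V π'' R.1 s) - V π' R.1 s ≤ f R + f Rn := by
      rw [hfRn]; simp only [hf]; linarith
    calc (⨆ π'' : S → A, V π'' R.1 s) - V π' R.1 s ≤ f R + f Rn := this
      _ ≤ 2 * ⨆ R', f R' := by linarith
  have hsup := ciSup_le hmain
  linarith
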